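/- Let X be a normed space over ℂ with dim X ≥ 2 and let a ∈ X. Then there is no net (e_α) in the continuous dual X* such that for every b ∈ X*, ‖b(a)·e_α − b‖ → 0 in the dual norm. In particular, the Banach algebra B_a(X) (which is X* with multiplication f·g := f(a)·g) has no approximate identity, bounded or unbounded. -/

import Mathlib

open Filter Topology

/-- There is a nonzero continuous functional vanishing at `a`, when `dim X ≥ 2`. -/
lemma exists_ne_zero_eq_zero_at {X : Type*} [NormedAddCommGroup X] [NormedSpace ℂ X]
    (hdim : 2 ≤ Module.rank ℂ X) (a : X) :
    ∃ b : X →L[ℂ] ℂ, b a = 0 ∧ b ≠ 0 := by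
  set S : Submodule ℂ X := Submodule.span ℂ {a} with hS
  have hSfin : FiniteDimensional ℂ S := by
    infer_instance
  have hSclosed : IsClosed (S : Set X) := Submodule.closed_of_finiteDimensional S
  have hSrank : Module.rank ℂ S ≤ 1 := by
    simpa using rank_span_le (R := ℂ) ({a} : Set X)
  have hSne : S ≠ ⊤ := by
    intro h
    rw [← rank_top ℂ X, ← h] at hdim
    exact absurd (hdim.trans hSrank) (by norm_num)
  obtain ⟨x, hx⟩ : ∃ x, x ∉ S := by
    by_contra h
    push_neg at h
    exact hSne (Submodule.eq_top_iff'.2 h)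
  -- quotient space
  haveI : IsClosed (S : Set X) := hSclosed
  letI : NormedAddCommGroup (X ⧸ S) := Submodule.Quotient.normedAddCommGroup S
  have hxq : (Submodule.Quotient.mk x : X ⧸ S) ≠ 0 := by
    simpa [Submodule.Quotient.mk_eq_zero] using hx
  obtain ⟨g, hg⟩ := SeparatingDual.exists_eq_one (R := ℂ) hxq
  let π : X →L[ℂ] X ⧸ S := ⟨S.mkQ, continuous_quot_mk⟩
  refine ⟨g.comp π, ?_, ?_⟩
  · have ha : a ∈ S := Submodule.mem_span_singleton_self a
    simp only [ContinuousLinearMap.comp_apply]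
    have : π a = 0 := by
      exact (Submodule.Quotient.mk_eq_zero S).mpr ha
    rw [this, map_zero]
  · intro h
    have : g (π x) = 0 := by
      rw [← ContinuousLinearMap.comp_apply, h]; rfl
    rw [show π x = Submodule.Quotient.mk x from rfl, hg] at this
    exact one_ne_zero this

/-- if `X` is a complex normed space with `dim X ≥ 2` and `a ∈ X`, then there is
no net `(e_α)` in the dual `X* = X →L[ℂ] ℂ` such that `‖b(a) • e_α - b‖ → 0` for every
`b ∈ X*`.  In particular the Banach algebra `B_a(X)` (the dual `X*` with the multiplication
`f · g := f(a) • g`) has no (right, hence no two-sided) approximate identity, bounded or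
unbounded. -/
theorem stmt_2 {X : Type*} [NormedAddCommGroup X] [NormedSpace ℂ X]
    (hdim : 2 ≤ Module.rank ℂ X) (a : X) :
    ¬ ∃ (ι : Type) (_ : Nonempty ι) (_ : SemilatticeSup ι) (e : ι → (X →L[ℂ] ℂ)),
        ∀ b : X →L[ℂ] ℂ, Tendsto (fun i => ‖b a • e i - b‖) atTop (𝓝 0) := by
  rintro ⟨ι, hne, hsup, e, he⟩
  obtain ⟨b, hba, hb0⟩ := exists_ne_zero_eq_zero_at hdim a
  have h0 := he b
  have heq : (fun i => ‖b a • e i - b‖) = fun _ : ι => ‖b‖ := by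
    funext i
    rw [hba, zero_smul ℂ (e i), zero_sub, norm_neg]
  rw [heq] at h0
  have h2 : (‖b‖ : ℝ) = 0 := tendsto_nhds_unique tendsto_const_nhds h0
  exact hb0 (norm_eq_zero.mp h2)
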